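/- Fix integers k > i ≥ 1, N₁ ≥ N₂ ≥ ⋯ ≥ N_{k−1} ≥ 0 and n ≥ 0. The map that doubles every part of an overpartition (sending each non-overlined part t to the non-overlined part 2t and each overlined part t̄ to the overlined part \overline{2t}) is a bijection from Ẽ_{N₁,…,N_{k−1};i}(n) onto W̃_{N₁,…,N_{k−1};i}(2n); moreover it sends the Gordon marking of each part to the Göllnitz–Gordon marking of the doubled part. -/

import Mathlib

open scoped BigOperators

/-- A part of an overpartition: its size, and whether it is overlined. -/
abbrev OPart := ℕ × Bool

/-- An overpartition: `f t` is the number of non-overlined parts equal to `t`, and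
`fbar t` is the number of overlined parts equal to `t` (at most one, since only the
first occurrence of a number may be overlined).  There are no parts of size `0`. -/
structure Overpartition where
  f : ℕ →₀ ℕ
  fbar : ℕ →₀ ℕ
  fbar_le_one : ∀ t, fbar t ≤ 1
  f_zero : f 0 = 0
  fbar_zero : fbar 0 = 0

namespace Overpartition

/-- the number of parts -/
def parts (l : Overpartition) : ℕ :=
  l.f.sum (fun _ m => m) + l.fbar.sum (fun _ m => m)

/-- weight: the sum of all parts -/
def wt (l : Overpartition) : ℕ :=
  l.f.sum (fun t m => t * m) + l.fbar.sum (fun t m => t * m)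

/-- `V l s`: the number of overlined parts of size at most `s` -/
def V (l : Overpartition) (s : ℕ) : ℕ := ∑ t ∈ Finset.Icc 1 s, l.fbar t

end Overpartition

/-- The difference/congruence conditions defining `Õ_{k,i}`. -/
def OCond (k i : ℕ) (l : Overpartition) : Prop :=
  (l.fbar 1 + l.f 2 ≤ i - 1) ∧
  (∀ t, 1 ≤ t → l.f (2*t) + l.fbar (2*t) + l.fbar (2*t+1) + l.f (2*t+2) ≤ k - 1) ∧
  (∀ t, 1 ≤ l.f (2*t+1) → l.f (2*t+2) ≤ k - 2) ∧
  (∀ t, 1 ≤ t → l.f (2*t) + l.fbar (2*t) + l.fbar (2*t+1) + l.f (2*t+2) = k - 1 →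
    t * l.f (2*t) + t * l.fbar (2*t) + t * l.fbar (2*t+1) + (t+1) * l.f (2*t+2)
      ≡ l.V (2*t+1) + i - 1 [MOD 2]) ∧
  (∀ t, 1 ≤ l.f (2*t+1) → l.f (2*t+2) = k - 2 →
    t + (t+1) * l.f (2*t+2) ≡ l.V (2*t+1) + i - 1 [MOD 2])

/-- Non-overlined parts are not congruent to `0, ±(2i-1)` modulo `4k-4`. -/
def PCond (k i : ℕ) (l : Overpartition) : Prop :=
  ∀ t, 0 < l.f t →
    ¬ t ≡ 0 [MOD 4*k-4] ∧ ¬ t ≡ 2*i-1 [MOD 4*k-4] ∧ ¬ t ≡ 4*k-3-2*i [MOD 4*k-4]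

/-- The difference/congruence conditions defining `Ẽ_{k,i}`. -/
def ECond (k i : ℕ) (l : Overpartition) : Prop :=
  l.f 1 ≤ i - 1 ∧
  (∀ t, 1 ≤ t → l.f t + l.fbar t + l.f (t+1) ≤ k - 1) ∧
  (∀ t, 1 ≤ t → l.f t + l.fbar t + l.f (t+1) = k - 1 →
    t * l.f t + t * l.fbar t + (t+1) * l.f (t+1) ≡ l.V t + i - 1 [MOD 2])

/-- the smallest part (in the order `1̄ < 1 < 2̄ < 2 < ⋯`) exists and is non-overlined -/
def SmallestNonOverlined (l : Overpartition) : Prop :=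
  ∃ s, 0 < l.f s ∧ l.fbar s = 0 ∧ ∀ t < s, l.f t = 0 ∧ l.fbar t = 0

/-- the smallest part (in the order `1̄ < 1 < 2̄ < 2 < ⋯`) exists and is overlined -/
def SmallestOverlined (l : Overpartition) : Prop :=
  ∃ s, 0 < l.fbar s ∧ ∀ t < s, l.f t = 0 ∧ l.fbar t = 0

def NoOverlined (l : Overpartition) : Prop := ∀ t, l.fbar t = 0

def NoOdd (l : Overpartition) : Prop := ∀ t, t % 2 = 1 → l.f t = 0 ∧ l.fbar t = 0

/-- the list of the parts of sizes `1,…,B` in increasing order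
(`1̄ < 1 < 2̄ < 2 < ⋯`); an overlined part is `(t, true)`. -/
def partsListUpTo (l : Overpartition) (B : ℕ) : List OPart :=
  (List.range B).flatMap (fun t =>
    (if l.fbar (t+1) = 1 then [((t+1 : ℕ), true)] else []) ++
    List.replicate (l.f (t+1)) ((t+1 : ℕ), false))

def obound (l : Overpartition) : ℕ := (l.f.support ∪ l.fbar.support).sup id + 1

/-- the list of all parts of `l` in increasing order -/
def partsList (l : Overpartition) : List OPart := partsListUpTo l (obound l)

/-- the multiset of parts of `l` -/
def partsMS (l : Overpartition) : Multiset OPart := (partsList l : Multiset OPart)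

/-- the least positive integer not belonging to `S` -/
def mex1 (S : Finset ℕ) : ℕ :=
  ((List.range (S.sup id + 2)).filter (fun r => decide (1 ≤ r ∧ r ∉ S))).headI

/-- the set of marks used by the already-marked parts satisfying `test` -/
def marksWhere (acc : List (OPart × ℕ)) (test : OPart → Bool) : Finset ℕ :=
  ((acc.filter (fun q => test q.1)).map (fun q => q.2)).toFinset

/-- process the parts in increasing order, assigning to each one the mark
computed by `markOf` from the previously marked parts -/
def markFold (markOf : List (OPart × ℕ) → OPart → ℕ) :
    List OPart → List (OPart × ℕ) → List (OPart × ℕ)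
  | [], acc => acc
  | p :: rest, acc => markFold markOf rest (acc ++ [(p, markOf acc p)])

/-- The Gordon marking rule: each part gets the smallest possible mark subject to:
(i) if `\overline{t+1}` is not a part, then all parts `t`, `t̄`, `t+1` get distinct
marks; (ii) if `\overline{t+1}` is a part, then the smallest mark assigned to a part
`t` or `t̄` may be reused for `t+1` or `\overline{t+1}`. -/
def gordonMarkOf (l : Overpartition) (acc : List (OPart × ℕ)) (p : OPart) : ℕ :=
  let same := marksWhere acc (fun q => decide (q.1 = p.1))
  let prev := marksWhere acc (fun q => decide (q.1 + 1 = p.1))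
  if l.fbar p.1 = 1 then
    mex1 (same ∪ (if h : prev.Nonempty then prev.erase (prev.min' h) else prev))
  else mex1 (same ∪ prev)

/-- the Gordon marking of `l`: the list of parts in increasing order with their marks -/
def gordonMarked (l : Overpartition) : List (OPart × ℕ) :=
  markFold (gordonMarkOf l) (partsList l) []

/-- `N_r`: the number of `r`-marked parts in the Gordon marking -/
def gordonN (l : Overpartition) (r : ℕ) : ℕ :=
  ((gordonMarked l).filter (fun q => decide (q.2 = r))).length

/-- The Göllnitz–Gordon marking rule (Definition 5.1): non-overlined odd and
overlined even parts get mark 1; an overlined odd part `\overline{2j+1}` gets the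
smallest mark different from those of `2j`, `\overline{2j}`; a non-overlined even part
`2j+2` gets the smallest mark different from earlier equal parts and, in case (b),
from the marks of `2j`, `\overline{2j}`, `\overline{2j+1}`; in case (c) it may not get
mark 1 and may reuse the smallest mark assigned to `2j` or `\overline{2j+1}`. -/
def ggMarkOf (l : Overpartition) (acc : List (OPart × ℕ)) (p : OPart) : ℕ :=
  if p.1 % 2 = 1 ∧ p.2 = false then 1
  else if p.1 % 2 = 0 ∧ p.2 = true then 1
  else if p.1 % 2 = 1 then
    mex1 (marksWhere acc (fun q => decide (q.1 = p.1 - 1)))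
  else
    let same := marksWhere acc (fun q => decide (q.1 = p.1))
    let lower := marksWhere acc
      (fun q => decide (q.1 = p.1 - 2 ∨ (q.1 = p.1 - 1 ∧ q.2 = true)))
    if 1 ∈ lower ∨ (l.f (p.1 - 1) = 0 ∧ l.fbar p.1 = 0) then
      mex1 (same ∪ lower)
    else
      mex1 (insert 1 same ∪ (if h : lower.Nonempty then lower.erase (lower.min' h) else lower))

/-- the Göllnitz–Gordon marking of `l` -/
def ggMarked (l : Overpartition) : List (OPart × ℕ) :=
  markFold (ggMarkOf l) (partsList l) []

/-- `N_r`: the number of `r`-marked parts in the Göllnitz–Gordon marking -/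
def ggN (l : Overpartition) (r : ℕ) : ℕ :=
  ((ggMarked l).filter (fun q => decide (q.2 = r))).length
/-- the 1-marked parts `λ^{(1)}_1 ≥ λ^{(1)}_2 ≥ ⋯` of the Göllnitz–Gordon marking,
in decreasing order (so index `j-1` holds `λ^{(1)}_j`) -/
def oneMarkedDesc (l : Overpartition) : List OPart :=
  (((ggMarked l).filter (fun q => decide (q.2 = 1))).map (fun q => q.1)).reverse

/-- the multiset of marked parts of a cluster: its `b`-th entry (0-indexed) is `(b+1)`-marked -/
def clusterMS (c : List OPart) : Multiset (OPart × ℕ) :=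
  (((c.zipIdx.map Prod.swap).map (fun q => (q.2, q.1 + 1))) : List (OPart × ℕ))

/-- there is a part of size `s` with mark `m` in the marked list `L` -/
def ExistsMarkedAt (L : List (OPart × ℕ)) (s m : ℕ) : Prop :=
  ∃ q ∈ L, q.1.1 = s ∧ q.2 = m

/-- conditions (i)–(iii) for the entry `y` (of mark `b+2`) following the entry `x`
(of mark `b+1`, i.e. 0-indexed position `b`) in a cluster -/
def chainStep (L : List (OPart × ℕ)) (b : ℕ) (x y : OPart) : Prop :=
  (x.1 % 2 = 1 → y.1 = x.1 + 1) ∧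
  (x.1 % 2 = 0 →
    (¬ ExistsMarkedAt L (x.1 + 2) (b + 1) → x.1 ≤ y.1 ∧ y.1 ≤ x.1 + 2) ∧
    (ExistsMarkedAt L (x.1 + 2) (b + 1) → x.1 ≤ y.1 ∧ y.1 ≤ x.1 + 1))

/-- cases (a), (b): the `j`-cluster is forced to be the singleton `λ^{(1)}_j` -/
def ForcedSingleton (one : List OPart) (j : ℕ) : Prop :=
  2 ≤ j ∧ ∃ cur prev, one[j-1]? = some cur ∧ one[j-2]? = some prev ∧
    (cur.1 = prev.1 ∨ (cur.1 % 2 = 1 ∧ prev.1 = cur.1 + 1))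

/-- `α` is the decomposition of the Göllnitz–Gordon marking of `l` into clusters
`α^{(N₁)}, …, α^{(1)}`: the `j`-cluster starts with the `j`-th largest 1-marked part,
the clusters partition the marked parts, forced singletons are singletons, consecutive
entries of a cluster obey conditions (i)–(iii), and each non-singleton-forced cluster
is a maximal such chain. -/
def IsClusterDecomp (l : Overpartition) (α : ℕ → List OPart) : Prop :=
  (∀ j, j = 0 ∨ ggN l 1 < j → α j = []) ∧
  (∀ j, 1 ≤ j → j ≤ ggN l 1 → (α j).head? = (oneMarkedDesc l)[j-1]?) ∧
  ((ggMarked l : Multiset (OPart × ℕ)) = ∑ j ∈ Finset.Icc 1 (ggN l 1), clusterMS (α j)) ∧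
  (∀ j, ForcedSingleton (oneMarkedDesc l) j → (α j).length = 1) ∧
  (∀ j b x y, (α j)[b]? = some x → (α j)[b+1]? = some y → chainStep (ggMarked l) b x y) ∧
  (∀ j, 1 ≤ j → j ≤ ggN l 1 → ¬ ForcedSingleton (oneMarkedDesc l) j →
    ∀ last, (α j).getLast? = some last →
      ¬ ∃ p : OPart,
        ((p, (α j).length + 1) ∈
          ((ggMarked l : Multiset (OPart × ℕ)) - ∑ j' ∈ Finset.Icc j (ggN l 1), clusterMS (α j'))) ∧
        chainStep (ggMarked l) ((α j).length - 1) last p)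

/-- the set `β(j)` (of 0-indexed positions): positions `c` such that
`|β_c^{(j)}| − |β_c^{(j+1)}| ≤ 2`, with strict inequality if either part is odd -/
def BetaIdx (α : ℕ → List OPart) (j : ℕ) : Set ℕ :=
  {c | ∃ x y, (α j)[c]? = some x ∧ (α (j+1))[c]? = some y ∧
     (x.1 : ℤ) - (y.1 : ℤ) ≤ 2 ∧ ((x.1 % 2 = 1 ∨ y.1 % 2 = 1) → (x.1 : ℤ) - (y.1 : ℤ) < 2)}

/-- `ν'` is obtained from `ν` by the second dilation of `p`-th kind: the odd part
`old` of the cluster `β^{(p)}` is replaced by the even part of size `|old|+1` with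
opposite overline status; when `p > 1` (in which case `β^{(p-1)}` must have no odd
part), additionally one part `chosen` of `β^{(p-1)}` — the entry indexed by the set
`β(p-1)` if it is nonempty, and otherwise the part of `β^{(p-1)}` of smallest size
and largest mark — is replaced by the part of size `|chosen|+1` with opposite
overline status. -/
def SecondDilationRel (ν ν' : Overpartition) (p : ℕ) : Prop :=
  ∃ α : ℕ → List OPart, IsClusterDecomp ν α ∧ 1 ≤ p ∧ p ≤ ggN ν 1 ∧
    ∃ old ∈ α p, old.1 % 2 = 1 ∧
      ((p = 1 ∧ partsMS ν' = (partsMS ν).erase old + {(old.1 + 1, !old.2)}) ∨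
       (1 < p ∧ (∀ q ∈ α (p-1), q.1 % 2 = 0) ∧
        ∃ c chosen, (α (p-1))[c]? = some chosen ∧
          ((BetaIdx α (p-1) = ∅ ∧ (∀ q ∈ α (p-1), chosen.1 ≤ q.1) ∧
             (∀ c' q, c < c' → (α (p-1))[c']? = some q → chosen.1 < q.1)) ∨
           c ∈ BetaIdx α (p-1)) ∧
          partsMS ν' = ((partsMS ν).erase old).erase chosen
            + {(old.1 + 1, !old.2), (chosen.1 + 1, !chosen.2)}))

/-- the second reduction of `p`-th kind: the inverse of the second dilation of `p`-th kind -/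
def SecondReductionRel (ν ν' : Overpartition) (p : ℕ) : Prop := SecondDilationRel ν' ν p

/-- the set of overpartitions satisfying the conditions of `Ẽ_{k,i}` whose Gordon
marking has exactly `N r` `r`-marked parts for `1 ≤ r ≤ k-1` -/
def ESetN (k i : ℕ) (N : ℕ → ℕ) : Set Overpartition :=
  {l | ECond k i l ∧ (∀ r, 1 ≤ r → r ≤ k-1 → gordonN l r = N r) ∧
    l.parts = ∑ j ∈ Finset.Icc 1 (k-1), N j}

def GSetN (k i : ℕ) (N : ℕ → ℕ) : Set Overpartition :=
  {l ∈ ESetN k i N | SmallestNonOverlined l}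

def HSetN (k i : ℕ) (N : ℕ → ℕ) : Set Overpartition :=
  {l ∈ ESetN k i N | SmallestOverlined l}

def BSetN (k i : ℕ) (N : ℕ → ℕ) : Set Overpartition :=
  {l ∈ GSetN k i N | NoOverlined l}

/-- the set of overpartitions satisfying the conditions of `Õ_{k,i}` whose
Göllnitz–Gordon marking has exactly `N r` `r`-marked parts for `1 ≤ r ≤ k-1` -/
def OSetN (k i : ℕ) (N : ℕ → ℕ) : Set Overpartition :=
  {l | OCond k i l ∧ (∀ r, 1 ≤ r → r ≤ k-1 → ggN l r = N r) ∧
    l.parts = ∑ j ∈ Finset.Icc 1 (k-1), N j}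

def WSetN (k i : ℕ) (N : ℕ → ℕ) : Set Overpartition :=
  {l ∈ OSetN k i N | NoOdd l}

/-- `(a;q)_n = ∏_{j=0}^{n-1} (1 - a q^j)` -/
noncomputable def qPoch (a q : ℂ) (n : ℕ) : ℂ := ∏ j ∈ Finset.range n, (1 - a * q ^ j)

/-- `(a;q)_∞ = ∏_{j=0}^{∞} (1 - a q^j)` -/
noncomputable def qPochInf (a q : ℂ) : ℂ := ∏' j : ℕ, (1 - a * q ^ j)

/-- `(a;q)_{n-1} = (a;q)_n / (1 - a q^{n-1})`, the standard meaning of a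
`q`-Pochhammer symbol with subscript `n - 1` (also for `n = 0`). -/
noncomputable def qPochSub1 (a q : ℂ) (n : ℕ) : ℂ := qPoch a q n / (1 - a * q ^ ((n : ℤ) - 1))

/-- sequences `N` with `N 1 ≥ N 2 ≥ ⋯ ≥ N (k-1) ≥ 0` (and `N j = 0` otherwise),
encoding the summation indices `N₁ ≥ ⋯ ≥ N_{k-1} ≥ 0` -/
def DecSeq (k : ℕ) : Set (ℕ → ℕ) :=
  {N | N 0 = 0 ∧ (∀ j, 1 ≤ j → N (j+1) ≤ N j) ∧ (∀ j, k ≤ j → N j = 0)}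

def doubleEmb : ℕ ↪ ℕ := ⟨fun t => 2 * t, mul_right_injective₀ two_ne_zero⟩

/-- doubling every part of an overpartition -/
noncomputable def double (l : Overpartition) : Overpartition where
  f := Finsupp.embDomain doubleEmb l.f
  fbar := Finsupp.embDomain doubleEmb l.fbar
  fbar_le_one := by
    intro t
    by_cases h : ∃ s, 2 * s = t
    · obtain ⟨s, rfl⟩ := h
      exact (Finsupp.embDomain_apply_self doubleEmb l.fbar s).trans_le (l.fbar_le_one s)
    · rw [Finsupp.embDomain_notin_range]
      · exact Nat.zero_le _
      · rintro ⟨s, rfl⟩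
        exact h ⟨s, rfl⟩
  f_zero := (Finsupp.embDomain_apply_self doubleEmb l.f 0).trans l.f_zero
  fbar_zero := (Finsupp.embDomain_apply_self doubleEmb l.fbar 0).trans l.fbar_zero

/-! ### Auxiliary lemmas for the doubling bijection -/

section AuxDoubling

open List

/-- characterization of `mex1` -/
lemma mex1_spec (S : Finset ℕ) :
    1 ≤ mex1 S ∧ mex1 S ∉ S ∧ ∀ s, 1 ≤ s → s ∉ S → mex1 S ≤ s := by
  classical
  set n := S.sup id + 2 with hn
  set L := (List.range n).filter (fun r => decide (1 ≤ r ∧ r ∉ S)) with hL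
  have hmemL : ∀ r : ℕ, r ∈ L ↔ r < n ∧ 1 ≤ r ∧ r ∉ S := by
    intro r
    simp [hL, List.mem_filter, List.mem_range, and_assoc]
  have hne : S.sup id + 1 ∈ L := by
    rw [hmemL]
    refine ⟨by omega, by omega, fun h => ?_⟩
    have := Finset.le_sup (f := id) h
    simp only [id] at this
    omega
  have hLne : L ≠ [] := List.ne_nil_of_mem hne
  obtain ⟨a, L', hcons⟩ := List.exists_cons_of_ne_nil hLne
  have hsorted : L.Pairwise (· < ·) := (List.pairwise_lt_range (n := n)).filter _
  have hmex : mex1 S = a := by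
    have : mex1 S = L.headI := rfl
    rw [this, hcons]
    rfl
  have haL : a ∈ L := by rw [hcons]; exact List.mem_cons_self
  have ha := (hmemL a).1 haL
  refine ⟨hmex ▸ ha.2.1, hmex ▸ ha.2.2, ?_⟩
  intro s h1 h2
  rw [hmex]
  by_cases hs : s < n
  · have hsL : s ∈ L := (hmemL s).2 ⟨hs, h1, h2⟩
    rw [hcons] at hsL
    rcases List.mem_cons.mp hsL with h | h
    · omega
    · have := List.rel_of_pairwise_cons (hcons ▸ hsorted) h
      omega
  · have : a < n := ha.1
    omega

lemma one_le_mex1 (S : Finset ℕ) : 1 ≤ mex1 S := (mex1_spec S).1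

lemma mex1_eq_one {S : Finset ℕ} (h : (1 : ℕ) ∉ S) : mex1 S = 1 :=
  le_antisymm ((mex1_spec S).2.2 1 le_rfl h) (mex1_spec S).1

lemma mem_marksWhere {acc : List (OPart × ℕ)} {test : OPart → Bool} {x : ℕ} :
    x ∈ marksWhere acc test ↔ ∃ q ∈ acc, test q.1 = true ∧ q.2 = x := by
  simp [marksWhere, List.mem_filter, and_assoc]

lemma markFold_nil (m : List (OPart × ℕ) → OPart → ℕ) (acc) : markFold m [] acc = acc := rfl

lemma markFold_cons (m : List (OPart × ℕ) → OPart → ℕ) (p xs acc) :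
    markFold m (p :: xs) acc = markFold m xs (acc ++ [(p, m acc p)]) := rfl

lemma markFold_append (m : List (OPart × ℕ) → OPart → ℕ) :
    ∀ xs ys acc, markFold m (xs ++ ys) acc = markFold m ys (markFold m xs acc)
  | [], ys, acc => rfl
  | p :: xs, ys, acc => by
      rw [List.cons_append, markFold_cons, markFold_cons, markFold_append m xs ys]

lemma markFold_fst (m : List (OPart × ℕ) → OPart → ℕ) :
    ∀ xs acc, (markFold m xs acc).map Prod.fst = acc.map Prod.fst ++ xs
  | [], acc => by simp [markFold]
  | p :: xs, acc => by
      rw [markFold_cons, markFold_fst m xs]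
      simp

/-- all marks assigned by `markFold` are at least `1` if the marking function is -/
lemma markFold_marks {m : List (OPart × ℕ) → OPart → ℕ} (hm : ∀ a p, 1 ≤ m a p) :
    ∀ (xs : List OPart) (acc), (∀ q ∈ acc, 1 ≤ (q : OPart × ℕ).2) →
      ∀ q ∈ markFold m xs acc, 1 ≤ q.2
  | [], acc, hacc, q, hq => hacc q hq
  | p :: xs, acc, hacc, q, hq => by
      refine markFold_marks hm xs _ ?_ q hq
      intro q' hq'
      rcases List.mem_append.mp hq' with h | h
      · exact hacc q' h
      · simp at h; subst h; exact hm acc p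

end AuxDoubling

section AuxParts

open List

/-- sort key: `1̄ < 1 < 2̄ < 2 < ⋯` -/
def okey (p : OPart) : ℕ := 2 * p.1 + (if p.2 then 0 else 1)

lemma partsListUpTo_succ (l : Overpartition) (B : ℕ) :
    partsListUpTo l (B+1) = partsListUpTo l B ++
      ((if l.fbar (B+1) = 1 then [((B+1 : ℕ), true)] else []) ++
        List.replicate (l.f (B+1)) ((B+1 : ℕ), false)) := by
  rw [partsListUpTo, partsListUpTo, List.range_succ, List.flatMap_append]
  simp [List.flatMap]

lemma mem_partsListUpTo {l : Overpartition} {p : OPart} {B : ℕ} :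
    p ∈ partsListUpTo l B ↔ 1 ≤ p.1 ∧ p.1 ≤ B ∧
      ((p.2 = true ∧ l.fbar p.1 = 1) ∨ (p.2 = false ∧ 0 < l.f p.1)) := by
  obtain ⟨s, b⟩ := p
  simp only [partsListUpTo, List.mem_flatMap, List.mem_range, List.mem_append,
    List.mem_replicate]
  constructor
  · rintro ⟨t, ht, h | h⟩
    · split at h
      case isTrue hf =>
        simp only [List.mem_singleton, Prod.mk.injEq] at h
        obtain ⟨rfl, rfl⟩ := h
        exact ⟨by omega, by omega, Or.inl ⟨rfl, hf⟩⟩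
      case isFalse => simp at h
    · obtain ⟨hne, h⟩ := h
      rw [Prod.mk.injEq] at h
      obtain ⟨rfl, rfl⟩ := h
      exact ⟨by omega, by omega, Or.inr ⟨rfl, Nat.pos_of_ne_zero hne⟩⟩
  · rintro ⟨h1, h2, ⟨rfl, hf⟩ | ⟨rfl, hf⟩⟩
    · refine ⟨s - 1, by omega, Or.inl ?_⟩
      rw [show s - 1 + 1 = s by omega, hf]
      simp
    · refine ⟨s - 1, by omega, Or.inr ?_⟩
      rw [show s - 1 + 1 = s by omega]
      exact ⟨by omega, rfl⟩

lemma mem_partsList {l : Overpartition} {p : OPart} :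
    p ∈ partsList l ↔ 1 ≤ p.1 ∧
      ((p.2 = true ∧ l.fbar p.1 = 1) ∨ (p.2 = false ∧ 0 < l.f p.1)) := by
  rw [partsList, mem_partsListUpTo]
  constructor
  · rintro ⟨h1, _, h⟩; exact ⟨h1, h⟩
  · rintro ⟨h1, h⟩
    refine ⟨h1, ?_, h⟩
    have hsup : p.1 ≤ (l.f.support ∪ l.fbar.support).sup id := by
      have hmem : p.1 ∈ l.f.support ∪ l.fbar.support := by
        rcases h with ⟨_, hf⟩ | ⟨_, hf⟩
        · exact Finset.mem_union_right _ (Finsupp.mem_support_iff.mpr (by omega))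
        · exact Finset.mem_union_left _ (Finsupp.mem_support_iff.mpr (by omega))
      simpa using Finset.le_sup (f := id) hmem
    rw [obound]; omega

lemma sorted_partsListUpTo (l : Overpartition) (B : ℕ) :
    (partsListUpTo l B).Pairwise (fun a b => okey a ≤ okey b) := by
  induction B with
  | zero => simp [partsListUpTo]
  | succ B ih =>
    rw [partsListUpTo_succ]
    rw [List.pairwise_append]
    refine ⟨ih, ?_, ?_⟩
    · rw [List.pairwise_append]
      refine ⟨by split <;> simp, List.pairwise_replicate.mpr (Or.inr le_rfl), ?_⟩
      intro a ha b hb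
      have ha' : a = ((B+1 : ℕ), true) := by
        split at ha <;> simp_all
      have hb' : b = ((B+1 : ℕ), false) := List.eq_of_mem_replicate hb
      subst ha'; subst hb'
      simp [okey]
    · intro a ha b hb
      have ha' := (mem_partsListUpTo.mp ha).2.1
      have hb' : b.1 = B + 1 := by
        rcases List.mem_append.mp hb with h | h
        · split at h <;> simp_all
        · rw [List.eq_of_mem_replicate h]
      simp only [okey, hb']
      split <;> split <;> omega

lemma sorted_partsList (l : Overpartition) :
    (partsList l).Pairwise (fun a b => okey a ≤ okey b) := sorted_partsListUpTo l _

lemma count_true_le_one (l : Overpartition) (t : ℕ) (B : ℕ) :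
    (partsListUpTo l B).count ((t, true) : OPart) ≤ 1 := by
  induction B with
  | zero => simp [partsListUpTo]
  | succ B ih =>
    rw [partsListUpTo_succ, List.count_append]
    by_cases ht : t = B + 1
    · subst ht
      have h0 : (partsListUpTo l B).count ((B+1, true) : OPart) = 0 := by
        rw [List.count_eq_zero]
        intro hmem
        have := (mem_partsListUpTo.mp hmem).2.1
        omega
      rw [h0, List.count_append]
      have h1 : (List.replicate (l.f (B+1)) ((B+1 : ℕ), false)).count ((B+1, true) : OPart) = 0 := by
        rw [List.count_eq_zero]
        intro hmem
        have := List.eq_of_mem_replicate hmem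
        simp at this
      rw [h1]
      split
      · simp
      · simp
    · have h2 : (((if l.fbar (B+1) = 1 then [((B+1 : ℕ), true)] else []) ++
          List.replicate (l.f (B+1)) ((B+1 : ℕ), false)).count ((t, true) : OPart)) = 0 := by
        rw [List.count_eq_zero]
        intro hmem
        rcases List.mem_append.mp hmem with h | h
        · split at h <;> simp_all
        · have := List.eq_of_mem_replicate h
          simp at this
      omega

/-- if `(t,true)` occurs in the parts list, nothing of size `t` occurs before it -/
lemma not_mem_of_true_split {l : Overpartition} {t : ℕ} {ys zs : List OPart} {b : Bool}
    (h : partsList l = ys ++ (((t : ℕ), true) :: zs)) : ((t : ℕ), b) ∉ ys := by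
  intro hmem
  have hsorted : (ys ++ (((t : ℕ), true) :: zs)).Pairwise (fun a b => okey a ≤ okey b) :=
    h ▸ sorted_partsList l
  rw [List.pairwise_append] at hsorted
  have hkey := hsorted.2.2 _ hmem ((t : ℕ), true) (List.mem_cons_self)
  have hb : b = true := by
    cases b
    · simp [okey] at hkey
    · rfl
  subst hb
  have hcount : (partsList l).count ((t, true) : OPart) ≤ 1 := count_true_le_one l t _
  rw [h, List.count_append, List.count_cons_self] at hcount
  have h1 : 1 ≤ ys.count ((t, true) : OPart) := List.count_pos_iff.mpr hmem
  omega

/-- if `(t,false)` occurs and `t̄` is a part, then `(t,true)` occurs strictly earlier -/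
lemma true_mem_left {l : Overpartition} {t : ℕ} {ys zs : List OPart}
    (hf : l.fbar t = 1) (h : partsList l = ys ++ (((t : ℕ), false) :: zs)) :
    ((t : ℕ), true) ∈ ys := by
  have hmemF : ((t : ℕ), false) ∈ partsList l := by rw [h]; simp
  have ht1 : 1 ≤ t := (mem_partsList.mp hmemF).1
  have hmemT : ((t : ℕ), true) ∈ partsList l := mem_partsList.mpr ⟨ht1, Or.inl ⟨rfl, hf⟩⟩
  rw [h, List.mem_append, List.mem_cons] at hmemT
  rcases hmemT with h1 | h1 | h1
  · exact h1
  · simp at h1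
  · exfalso
    have hsorted : (ys ++ (((t : ℕ), false) :: zs)).Pairwise (fun a b => okey a ≤ okey b) :=
      h ▸ sorted_partsList l
    rw [List.pairwise_append] at hsorted
    have := List.rel_of_pairwise_cons hsorted.2.1 h1
    simp [okey] at this

end AuxParts

section AuxDouble

open List

/-- doubling a part -/
def dbl (p : OPart) : OPart := (2 * p.1, p.2)

/-- doubling a marked part -/
def dblM (q : OPart × ℕ) : OPart × ℕ := ((2 * q.1.1, q.1.2), q.2)

lemma double_f_even (l : Overpartition) (t : ℕ) : (double l).f (2 * t) = l.f t :=
  Finsupp.embDomain_apply_self doubleEmb l.f t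

lemma double_fbar_even (l : Overpartition) (t : ℕ) : (double l).fbar (2 * t) = l.fbar t :=
  Finsupp.embDomain_apply_self doubleEmb l.fbar t

lemma double_f_odd (l : Overpartition) {s : ℕ} (h : s % 2 = 1) : (double l).f s = 0 :=
  Finsupp.embDomain_notin_range _ _ _ (by rintro ⟨a, rfl⟩; simp [doubleEmb] at h)

lemma double_fbar_odd (l : Overpartition) {s : ℕ} (h : s % 2 = 1) : (double l).fbar s = 0 :=
  Finsupp.embDomain_notin_range _ _ _ (by rintro ⟨a, rfl⟩; simp [doubleEmb] at h)

lemma obound_double_le (l : Overpartition) : obound (double l) ≤ 2 * obound l := by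
  rw [obound, obound]
  have hle : ∀ x ∈ ((double l).f.support ∪ (double l).fbar.support),
      id x ≤ 2 * ((l.f.support ∪ l.fbar.support).sup id) := by
    intro x hx
    simp only [double, Finsupp.support_embDomain, Finset.mem_union, Finset.mem_map] at hx
    rcases hx with ⟨a, ha, rfl⟩ | ⟨a, ha, rfl⟩
    · have := Finset.le_sup (f := id) (Finset.mem_union_left l.fbar.support ha)
      simp only [id, doubleEmb, Function.Embedding.coeFn_mk] at this ⊢
      omega
    · have := Finset.le_sup (f := id) (Finset.mem_union_right l.f.support ha)
      simp only [id, doubleEmb, Function.Embedding.coeFn_mk] at this ⊢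
      omega
  have := Finset.sup_le hle
  omega

lemma partsListUpTo_eq_partsList {l : Overpartition} {B : ℕ} (h : obound l ≤ B) :
    partsListUpTo l B = partsList l := by
  induction B, h using Nat.le_induction with
  | base => rfl
  | succ B hB ih =>
    rw [partsListUpTo_succ, ih]
    have hout : ∀ g : ℕ →₀ ℕ, g ∈ [l.f, l.fbar] → g (B+1) = 0 := by
      intro g hg
      by_contra h0
      have hmem : B + 1 ∈ l.f.support ∪ l.fbar.support := by
        rcases List.mem_pair.mp hg with rfl | rfl
        · exact Finset.mem_union_left _ (Finsupp.mem_support_iff.mpr h0)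
        · exact Finset.mem_union_right _ (Finsupp.mem_support_iff.mpr h0)
      have := Finset.le_sup (f := id) hmem
      simp only [id] at this
      rw [obound] at hB
      omega
    have hf := hout l.f (by simp)
    have hfb := hout l.fbar (by simp)
    rw [hf, hfb]
    simp

lemma partsListUpTo_double (l : Overpartition) (B : ℕ) :
    partsListUpTo (double l) (2 * B) = (partsListUpTo l B).map dbl := by
  induction B with
  | zero => simp [partsListUpTo]
  | succ B ih =>
    have h2 : 2 * (B + 1) = (2 * B + 1) + 1 := by ring
    rw [h2, partsListUpTo_succ, show 2 * B + 1 = (2 * B) + 1 from rfl, partsListUpTo_succ,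
      partsListUpTo_succ l B, List.map_append, ← ih]
    have hodd1 : (double l).fbar (2 * B + 1) = 0 := double_fbar_odd l (by omega)
    have hodd2 : (double l).f (2 * B + 1) = 0 := double_f_odd l (by omega)
    have heq1 : (2 : ℕ) * B + 1 + 1 = 2 * (B + 1) := by ring
    have he1 : (double l).fbar (2 * B + 1 + 1) = l.fbar (B + 1) := by
      rw [heq1, double_fbar_even]
    have he2 : (double l).f (2 * B + 1 + 1) = l.f (B + 1) := by
      rw [heq1, double_f_even]
    rw [hodd1, hodd2, he1, he2]
    by_cases hfb : l.fbar (B+1) = 1 <;>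
      simp [hfb, dbl, heq1, List.map_replicate]

lemma partsList_double (l : Overpartition) :
    partsList (double l) = (partsList l).map dbl := by
  rw [← partsListUpTo_eq_partsList (obound_double_le l), partsListUpTo_double]
  rfl

end AuxDouble

section AuxGordon

open List

lemma one_le_gordonMarkOf (l : Overpartition) (a : List (OPart × ℕ)) (p : OPart) :
    1 ≤ gordonMarkOf l a p := by
  rw [gordonMarkOf]
  split <;> exact one_le_mex1 _

lemma gordon_marks_ge_one (l : Overpartition) (ys : List OPart) :
    ∀ q ∈ markFold (gordonMarkOf l) ys [], 1 ≤ q.2 :=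
  markFold_marks (one_le_gordonMarkOf l) ys [] (by simp)

/-- an overlined part always receives mark `1` in the Gordon marking -/
lemma gordon_mark_true (l : Overpartition) (ys zs : List OPart) (t : ℕ)
    (h : partsList l = ys ++ (((t : ℕ), true) :: zs)) :
    gordonMarkOf l (markFold (gordonMarkOf l) ys []) ((t : ℕ), true) = 1 := by
  set A := markFold (gordonMarkOf l) ys [] with hA
  have hfstA : A.map Prod.fst = ys := by
    rw [hA, markFold_fst]; simp
  have hfb : l.fbar t = 1 := by
    have hmem : ((t : ℕ), true) ∈ partsList l := by rw [h]; simp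
    rcases (mem_partsList.mp hmem).2 with h' | h'
    · exact h'.2
    · simp at h'
  rw [gordonMarkOf]
  simp only [show ((t : ℕ), true).1 = t from rfl, hfb, if_pos rfl]
  apply mex1_eq_one
  intro hmem
  rcases Finset.mem_union.mp hmem with hs | hx
  · obtain ⟨q', hq', htest, _⟩ := mem_marksWhere.mp hs
    have ht : q'.1.1 = t := of_decide_eq_true htest
    have hmem' : q'.1 ∈ ys := by
      rw [← hfstA]; exact List.mem_map_of_mem hq'
    have : ((t : ℕ), q'.1.2) ∈ ys := by
      rw [← ht]
      simpa using hmem'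
    exact not_mem_of_true_split h this
  · set prev := marksWhere A (fun q => decide (q.1 + 1 = ((t : ℕ), true).1)) with hprev
    have hge : ∀ x ∈ prev, 1 ≤ x := by
      intro x hx'
      obtain ⟨q', hq', _, hxe⟩ := mem_marksWhere.mp hx'
      have := gordon_marks_ge_one l ys q' hq'
      omega
    by_cases hne : prev.Nonempty
    · rw [dif_pos hne] at hx
      have h1p : (1 : ℕ) ∈ prev := Finset.mem_of_mem_erase hx
      have hmin : prev.min' hne = 1 :=
        le_antisymm (Finset.min'_le _ _ h1p) (hge _ (Finset.min'_mem _ _))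
      exact (Finset.ne_of_mem_erase hx) hmin.symm
    · rw [dif_neg hne] at hx
      exact hne ⟨1, hx⟩

/-- in the Gordon marking of a prefix of the parts list, all marks are `≥ 1` and
overlined parts are `1`-marked -/
lemma gordon_inv (l : Overpartition) :
    ∀ ys zs, partsList l = ys ++ zs →
      ∀ q ∈ markFold (gordonMarkOf l) ys [], 1 ≤ q.2 ∧ (q.1.2 = true → q.2 = 1) := by
  intro ys
  induction ys using List.reverseRecOn with
  | nil => intro zs h q hq; simp [markFold] at hq
  | append_singleton as p ih =>
    intro zs h q hq
    rw [markFold_append, markFold_cons, markFold_nil] at hq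
    set A := markFold (gordonMarkOf l) as [] with hA
    have h' : partsList l = as ++ (p :: zs) := by simpa using h
    rcases List.mem_append.mp hq with hq' | hq'
    · exact ih _ h' q hq'
    · simp only [List.mem_singleton] at hq'
      subst hq'
      refine ⟨one_le_gordonMarkOf l A p, fun hp => ?_⟩
      obtain ⟨t, b⟩ := p
      simp only at hp
      subst hp
      exact gordon_mark_true l as zs t h'
end AuxGordon

section AuxMarkEq

open List

/-- marks of parts of size `s` -/
def sameSet (acc : List (OPart × ℕ)) (s : ℕ) : Finset ℕ :=
  marksWhere acc (fun q => decide (q.1 = s))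

/-- marks used in the Göllnitz–Gordon rule for an even part of size `s` -/
def lowSet (acc : List (OPart × ℕ)) (s : ℕ) : Finset ℕ :=
  marksWhere acc (fun q => decide (q.1 = s - 2 ∨ (q.1 = s - 1 ∧ q.2 = true)))

/-- marks of parts of size `t - 1` -/
def prevSet (acc : List (OPart × ℕ)) (t : ℕ) : Finset ℕ :=
  marksWhere acc (fun q => decide (q.1 + 1 = t))

/-- remove the minimum of a finite set -/
def dtrim (S : Finset ℕ) : Finset ℕ := if h : S.Nonempty then S.erase (S.min' h) else S

lemma ggMarkOf_true (l' : Overpartition) (acc : List (OPart × ℕ)) (s : ℕ) :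
    ggMarkOf l' acc ((2 * s : ℕ), true) = 1 := by
  rw [ggMarkOf]
  simp [Nat.mul_mod_right]

lemma ggMarkOf_even (l' : Overpartition) (acc : List (OPart × ℕ)) (s : ℕ) :
    ggMarkOf l' acc ((2 * s : ℕ), false) =
      if 1 ∈ lowSet acc (2 * s) ∨ (l'.f (2 * s - 1) = 0 ∧ l'.fbar (2 * s) = 0) then
        mex1 (sameSet acc (2 * s) ∪ lowSet acc (2 * s))
      else
        mex1 (insert 1 (sameSet acc (2 * s)) ∪ dtrim (lowSet acc (2 * s))) := by
  rw [ggMarkOf]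
  simp only [show ((2 * s : ℕ), false).1 = 2 * s from rfl,
    show ((2 * s : ℕ), false).2 = false from rfl, Nat.mul_mod_right]
  rw [if_neg (by simp), if_neg (by simp), if_neg (by simp)]
  rfl

lemma gordonMarkOf_eq (l : Overpartition) (acc : List (OPart × ℕ)) (t : ℕ) (b : Bool) :
    gordonMarkOf l acc ((t : ℕ), b) =
      if l.fbar t = 1 then mex1 (sameSet acc t ∪ dtrim (prevSet acc t))
      else mex1 (sameSet acc t ∪ prevSet acc t) := rfl

end AuxMarkEq

section AuxMarkEq2

open List

lemma sameSet_double (acc : List (OPart × ℕ)) (t : ℕ) :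
    sameSet (acc.map dblM) (2 * t) = sameSet acc t := by
  ext x
  simp only [sameSet, mem_marksWhere, List.mem_map]
  constructor
  · rintro ⟨q, ⟨q₀, hq₀, rfl⟩, h1, h2⟩
    refine ⟨q₀, hq₀, ?_, h2⟩
    simp only [decide_eq_true_eq] at h1 ⊢; simp only [dblM] at h1 ⊢
    omega
  · rintro ⟨q₀, hq₀, h1, h2⟩
    refine ⟨dblM q₀, ⟨q₀, hq₀, rfl⟩, ?_, h2⟩
    simp only [decide_eq_true_eq] at h1 ⊢; simp only [dblM] at h1 ⊢
    omega

lemma lowSet_double (acc : List (OPart × ℕ)) (t : ℕ) (ht : 1 ≤ t)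
    (hsz : ∀ q ∈ acc, 1 ≤ (q : OPart × ℕ).1.1) :
    lowSet (acc.map dblM) (2 * t) = prevSet acc t := by
  ext x
  simp only [lowSet, prevSet, mem_marksWhere, List.mem_map]
  constructor
  · rintro ⟨q, ⟨q₀, hq₀, rfl⟩, h1, h2⟩
    refine ⟨q₀, hq₀, ?_, h2⟩
    have := hsz q₀ hq₀
    simp only [decide_eq_true_eq] at h1 ⊢; simp only [dblM] at h1 ⊢
    rcases h1 with h1 | ⟨h1, _⟩ <;> omega
  · rintro ⟨q₀, hq₀, h1, h2⟩
    refine ⟨dblM q₀, ⟨q₀, hq₀, rfl⟩, ?_, h2⟩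
    have := hsz q₀ hq₀
    simp only [decide_eq_true_eq] at h1 ⊢; simp only [dblM] at h1 ⊢
    left; omega

/-- the key step: the Göllnitz–Gordon mark of a doubled part equals the Gordon mark -/
lemma mark_eq (l : Overpartition) (ys zs : List OPart) (p : OPart)
    (h : partsList l = ys ++ p :: zs) :
    ggMarkOf (double l) ((markFold (gordonMarkOf l) ys []).map dblM) (dbl p) =
      gordonMarkOf l (markFold (gordonMarkOf l) ys []) p := by
  set A := markFold (gordonMarkOf l) ys [] with hA
  obtain ⟨t, b⟩ := p
  have hps : ((t, b) : OPart) ∈ partsList l := by rw [h]; simp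
  have ht1 : 1 ≤ t := (mem_partsList.mp hps).1
  have hfstA : A.map Prod.fst = ys := by rw [hA, markFold_fst]; simp
  have hszA : ∀ q ∈ A, 1 ≤ (q : OPart × ℕ).1.1 := by
    intro q hq
    have hmem : q.1 ∈ ys := by rw [← hfstA]; exact List.mem_map_of_mem hq
    have : q.1 ∈ partsList l := by rw [h]; exact List.mem_append_left _ hmem
    exact (mem_partsList.mp this).1
  have hinv := gordon_inv l ys ((t, b) :: zs) h
  cases b with
  | true =>
    show ggMarkOf (double l) (A.map dblM) ((2 * t : ℕ), true) = _
    rw [ggMarkOf_true, gordon_mark_true l ys zs t h]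
  | false =>
    show ggMarkOf (double l) (A.map dblM) ((2 * t : ℕ), false) = _
    rw [ggMarkOf_even, gordonMarkOf_eq, sameSet_double, lowSet_double A t ht1 hszA,
      double_f_odd l (show (2 * t - 1) % 2 = 1 by omega), double_fbar_even]
    have hprevge : ∀ x ∈ prevSet A t, 1 ≤ x := by
      intro x hx
      obtain ⟨q', hq', _, hxe⟩ := mem_marksWhere.mp hx
      have := (hinv q' hq').1
      omega
    rcases Nat.le_one_iff_eq_zero_or_eq_one.mp (l.fbar_le_one t) with hfb | hfb
    · rw [if_pos (Or.inr ⟨rfl, hfb⟩), if_neg (by omega)]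
    · -- `t̄` is a part, hence already `1`-marked in `A`
      have hyt : ((t : ℕ), true) ∈ ys := true_mem_left hfb h
      obtain ⟨q, hq, hq1⟩ : ∃ q ∈ A, q.1 = ((t : ℕ), true) := by
        rw [← hfstA] at hyt
        obtain ⟨q, hq, hq1⟩ := List.mem_map.mp hyt
        exact ⟨q, hq, hq1⟩
      have hqmark : q.2 = 1 := (hinv q hq).2 (by rw [hq1])
      have h1same : (1 : ℕ) ∈ sameSet A t :=
        mem_marksWhere.mpr ⟨q, hq, by rw [hq1]; simp, hqmark⟩
      rw [if_pos hfb]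
      by_cases h1p : (1 : ℕ) ∈ prevSet A t
      · rw [if_pos (Or.inl h1p)]
        have hne : (prevSet A t).Nonempty := ⟨1, h1p⟩
        have hmin : (prevSet A t).min' hne = 1 :=
          le_antisymm (Finset.min'_le _ _ h1p) (hprevge _ (Finset.min'_mem _ _))
        rw [dtrim, dif_pos hne, hmin]
        congr 1
        ext x
        simp only [Finset.mem_union, Finset.mem_erase]
        constructor
        · rintro (hx | hx)
          · exact Or.inl hx
          · by_cases hx1 : x = 1
            · exact Or.inl (hx1 ▸ h1same)
            · exact Or.inr ⟨hx1, hx⟩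
        · rintro (hx | ⟨_, hx⟩)
          · exact Or.inl hx
          · exact Or.inr hx
      · rw [if_neg (by simp [h1p, hfb]), Finset.insert_eq_self.mpr h1same]
end AuxMarkEq2

section AuxMain

open List

lemma markFold_double (l : Overpartition) :
    ∀ (zs ys : List OPart), partsList l = ys ++ zs →
      markFold (ggMarkOf (double l)) (zs.map dbl) ((markFold (gordonMarkOf l) ys []).map dblM)
        = (markFold (gordonMarkOf l) (ys ++ zs) []).map dblM
  | [], ys, h => by simp [markFold]
  | p :: zs, ys, h => by
    rw [List.map_cons, markFold_cons, mark_eq l ys zs p h]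
    have hstep : (markFold (gordonMarkOf l) ys []).map dblM ++
        [(dbl p, gordonMarkOf l (markFold (gordonMarkOf l) ys []) p)] =
        (markFold (gordonMarkOf l) (ys ++ [p]) []).map dblM := by
      rw [markFold_append, markFold_cons, markFold_nil, List.map_append]
      rfl
    rw [hstep, markFold_double l zs (ys ++ [p]) (by rw [h]; simp)]
    congr 1
    simp

/-- the Göllnitz–Gordon marking of the doubled overpartition is the doubled Gordon marking -/
lemma ggMarked_double (l : Overpartition) :
    ggMarked (double l) = (gordonMarked l).map dblM := by
  rw [ggMarked, gordonMarked, partsList_double]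
  have := markFold_double l (partsList l) [] (by simp)
  simpa [markFold] using this

lemma ggN_double (l : Overpartition) (r : ℕ) : ggN (double l) r = gordonN l r := by
  rw [ggN, gordonN, ggMarked_double]
  have hfun : ((fun (q : OPart × ℕ) => decide (q.2 = r)) ∘ dblM) =
      fun (q : OPart × ℕ) => decide (q.2 = r) := rfl
  rw [show (gordonMarked l).map dblM = (gordonMarked l).map dblM from rfl, List.filter_map,
    hfun, List.length_map]

lemma parts_double (l : Overpartition) : (double l).parts = l.parts := by
  rw [Overpartition.parts, Overpartition.parts]
  simp [double, Finsupp.sum_embDomain]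

lemma wt_double (l : Overpartition) : (double l).wt = 2 * l.wt := by
  rw [Overpartition.wt, Overpartition.wt]
  simp only [double, Finsupp.sum_embDomain]
  rw [Finsupp.sum, Finsupp.sum, Finsupp.sum, Finsupp.sum, Nat.mul_add, Finset.mul_sum,
    Finset.mul_sum]
  congr 1 <;> refine Finset.sum_congr rfl fun a _ => ?_ <;>
    simp [doubleEmb] <;> ring

lemma V_double (l : Overpartition) : ∀ t : ℕ, (double l).V (2 * t + 1) = l.V t := by
  intro t
  induction t with
  | zero =>
    simp only [Overpartition.V]
    rw [show 2 * 0 + 1 = 1 by norm_num]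
    simp [double_fbar_odd l (show 1 % 2 = 1 by norm_num)]
  | succ t ih =>
    have h1 : 2 * (t + 1) + 1 = (2 * t + 1) + 1 + 1 := by ring
    rw [Overpartition.V, h1, Finset.sum_Icc_succ_top (by omega),
      Finset.sum_Icc_succ_top (by omega), ← Overpartition.V, ih]
    rw [show (2 * t + 1) + 1 = 2 * (t + 1) by ring, double_fbar_even,
      double_fbar_odd l (show (2 * (t + 1) + 1) % 2 = 1 by omega)]
    rw [Overpartition.V, Overpartition.V, Finset.sum_Icc_succ_top (by omega)]
    omega

lemma Overpartition.ext' {a b : Overpartition} (hf : a.f = b.f) (hfb : a.fbar = b.fbar) :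
    a = b := by
  cases a; cases b; simp_all

/-- halving every part of an overpartition (meaningful when there are no odd parts) -/
noncomputable def halve (l : Overpartition) : Overpartition where
  f := Finsupp.comapDomain (fun t => 2 * t) l.f (fun a _ b _ h => by simpa using h)
  fbar := Finsupp.comapDomain (fun t => 2 * t) l.fbar (fun a _ b _ h => by simpa using h)
  fbar_le_one := fun t => by
    exact l.fbar_le_one _
  f_zero := by
    show l.f (2 * 0) = 0
    simpa using l.f_zero
  fbar_zero := by
    show l.fbar (2 * 0) = 0
    simpa using l.fbar_zero

lemma halve_f (l : Overpartition) (t : ℕ) : (halve l).f t = l.f (2 * t) := rfl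

lemma halve_fbar (l : Overpartition) (t : ℕ) : (halve l).fbar t = l.fbar (2 * t) := rfl

lemma double_halve {l : Overpartition} (h : NoOdd l) : double (halve l) = l := by
  apply Overpartition.ext'
  · ext s
    rcases Nat.even_or_odd s with ⟨u, hu⟩ | ⟨u, hu⟩
    · rw [show s = 2 * u by omega, double_f_even, halve_f]
    · rw [double_f_odd _ (show s % 2 = 1 by omega)]
      exact ((h s (by omega)).1).symm
  · ext s
    rcases Nat.even_or_odd s with ⟨u, hu⟩ | ⟨u, hu⟩
    · rw [show s = 2 * u by omega, double_fbar_even, halve_fbar]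
    · rw [double_fbar_odd _ (show s % 2 = 1 by omega)]
      exact ((h s (by omega)).2).symm

lemma double_injective : Function.Injective double := by
  intro a b h
  apply Overpartition.ext'
  · ext t
    have := congrArg (fun x => x.f (2 * t)) h
    simpa [double_f_even] using this
  · ext t
    have := congrArg (fun x => x.fbar (2 * t)) h
    simpa [double_fbar_even] using this

end AuxMain

section AuxCond

lemma OCond_double {k i : ℕ} {l : Overpartition} (hE : ECond k i l) : OCond k i (double l) := by
  obtain ⟨h1, h2, h3⟩ := hE
  refine ⟨?_, ?_, ?_, ?_, ?_⟩
  · rw [double_fbar_odd l (by norm_num : (1 : ℕ) % 2 = 1),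
      show (2 : ℕ) = 2 * 1 by norm_num, double_f_even]
    omega
  · intro t ht
    rw [double_f_even, double_fbar_even, double_fbar_odd l (by omega : (2 * t + 1) % 2 = 1),
      show 2 * t + 2 = 2 * (t + 1) by ring, double_f_even]
    have := h2 t ht
    omega
  · intro t hf
    rw [double_f_odd l (by omega)] at hf
    omega
  · intro t ht heq
    rw [double_f_even, double_fbar_even, double_fbar_odd l (by omega : (2 * t + 1) % 2 = 1),
      show 2 * t + 2 = 2 * (t + 1) by ring, double_f_even] at heq ⊢
    rw [V_double]
    have := h3 t ht (by omega)
    simpa using this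
  · intro t hf
    rw [double_f_odd l (by omega)] at hf
    omega

lemma ECond_halve {k i : ℕ} {l' : Overpartition} (hO : OCond k i l') (hodd : NoOdd l') :
    ECond k i (halve l') := by
  obtain ⟨h1, h2, _, h4, _⟩ := hO
  have hdl : double (halve l') = l' := double_halve hodd
  refine ⟨?_, ?_, ?_⟩
  · rw [halve_f, show (2 : ℕ) * 1 = 2 by norm_num]
    omega
  · intro t ht
    rw [halve_f, halve_fbar, halve_f, show 2 * (t + 1) = 2 * t + 2 by ring]
    have hb : l'.fbar (2 * t + 1) = 0 := (hodd _ (by omega)).2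
    have := h2 t ht
    omega
  · intro t ht heq
    rw [halve_f, halve_fbar, halve_f, show 2 * (t + 1) = 2 * t + 2 by ring] at heq ⊢
    have hV : (halve l').V t = l'.V (2 * t + 1) := by
      rw [← V_double (halve l') t, hdl]
    rw [hV]
    have hb : l'.fbar (2 * t + 1) = 0 := (hodd _ (by omega)).2
    have := h4 t ht (by omega)
    rw [hb] at this
    simpa using this

end AuxCond
/-- doubling every part is a bijection from `Ẽ_{N₁,…,N_{k-1};i}(n)` onto
`W̃_{N₁,…,N_{k-1};i}(2n)`, and it sends the Gordon marking of each part to the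
Göllnitz–Gordon marking of the doubled part. -/
theorem doubling_bijection
    (k i : ℕ) (hik : i < k) (hi : 1 ≤ i) (N : ℕ → ℕ)
    (hmono : ∀ j, 1 ≤ j → j + 2 ≤ k → N (j+1) ≤ N j) (n : ℕ) :
    Set.BijOn double {l | l ∈ ESetN k i N ∧ l.wt = n} {l | l ∈ WSetN k i N ∧ l.wt = 2 * n} ∧
    (∀ l, l ∈ ESetN k i N ∧ l.wt = n →
      ggMarked (double l) = (gordonMarked l).map (fun q => ((2 * q.1.1, q.1.2), q.2))) := by
  constructor
  · refine ⟨?_, ?_, ?_⟩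
    · -- maps to
      rintro l ⟨⟨hE, hN, hparts⟩, hwt⟩
      refine ⟨⟨⟨OCond_double hE, ?_, ?_⟩, ?_⟩, ?_⟩
      · intro r hr1 hr2
        rw [ggN_double]
        exact hN r hr1 hr2
      · rw [parts_double]
        exact hparts
      · intro t htodd
        exact ⟨double_f_odd l htodd, double_fbar_odd l htodd⟩
      · rw [wt_double, hwt]
    · -- injective
      exact fun a _ b _ h => double_injective h
    · -- surjective
      rintro l' ⟨⟨⟨hO, hN, hparts⟩, hodd⟩, hwt⟩
      have hdl : double (halve l') = l' := double_halve hodd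
      refine ⟨halve l', ⟨⟨ECond_halve hO hodd, ?_, ?_⟩, ?_⟩, hdl⟩
      · intro r hr1 hr2
        rw [← ggN_double, hdl]
        exact hN r hr1 hr2
      · rw [← parts_double, hdl]
        exact hparts
      · have hw : (double (halve l')).wt = l'.wt := by rw [hdl]
        rw [wt_double] at hw
        omega
  · intro l _
    exact ggMarked_double l
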